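/- Let n and x be natural numbers with x ≤ n, and let τ be the unique real number in (0,1) with I_n(τ, x) = I_n(1 − τ, n − x). Then τ is the unique zero of J_n(·, x) in the open interval (0, 1): J_n(τ, x) = 0, and every a ∈ (0,1) with J_n(a, x) = 0 equals τ. -/

import Mathlib

/-- `I_n(a, x) = a^{x+2} ∫₀¹ t^{x+1} (1 − t) (1 − a t)^{n−x} dt`. -/
noncomputable def In (n x : ℕ) (a : ℝ) : ℝ :=
  a ^ (x + 2) * ∫ t in (0 : ℝ)..1, t ^ (x + 1) * (1 - t) * (1 - a * t) ^ (n - x)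

/-- The polynomial `J_n(a, x)`. -/
noncomputable def Jn (n x : ℕ) (a : ℝ) : ℝ :=
  2 * a ^ (x + 2) * ∑ r ∈ Finset.range (n - x + 1),
      ((n + 3).choose (n - x - r) : ℝ) * ((x + r).choose r : ℝ) * (-1) ^ r * a ^ r
    - ((n : ℝ) - x + 1) * ((n : ℝ) + 3) * a + ((n : ℝ) - x + 1) * ((x : ℝ) + 1)

section IBaux

open intervalIntegral MeasureTheory Set Nat Finset

noncomputable def Pn (n y : ℕ) (c : ℝ) : ℝ :=
  ∫ s in (0 : ℝ)..c, s ^ (y + 1) * (c - s) * (1 - s) ^ (n - y)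

lemma Pn_eq (n y : ℕ) {c : ℝ} (hc : c ≠ 0) : Pn n y c = c * In n y c := by
  have h1 : ∀ s : ℝ, s ^ (y + 1) * (c - s) * (1 - s) ^ (n - y)
      = c ^ (y + 2) * ((s / c) ^ (y + 1) * (1 - s / c) * (1 - c * (s / c)) ^ (n - y)) := by
    intro s
    rw [mul_div_cancel₀ _ hc, div_pow]
    field_simp
    ring
  have h2 : Pn n y c
      = ∫ s in (0 : ℝ)..c, c ^ (y + 2) * ((s / c) ^ (y + 1) * (1 - s / c) * (1 - c * (s / c)) ^ (n - y)) :=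
    integral_congr fun s _ => h1 s
  rw [Pn] at *
  rw [h2, intervalIntegral.integral_const_mul, integral_comp_div (f := fun t => t ^ (y + 1) * (1 - t) * (1 - c * t) ^ (n - y)) hc]
  simp [In, div_self hc]
  ring

lemma beta_nat : ∀ (k m : ℕ), ∫ s in (0:ℝ)..1, s ^ m * (1 - s) ^ k
    = (m ! : ℝ) * k ! / (m + k + 1)! := by
  intro k
  induction k with
  | zero =>
    intro m
    simp [integral_pow, Nat.factorial_succ]
    rw [eq_div_iff (by positivity)]
    field_simp
  | succ k ih =>
    intro m
    -- FTC on g s = s^(m+1) * (1-s)^(k+1)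
    have hderiv : ∀ s ∈ uIcc (0:ℝ) 1, HasDerivAt (fun s : ℝ => s ^ (m+1) * (1-s) ^ (k+1))
        (((m:ℝ)+1) * s ^ m * (1-s) ^ (k+1) - ((k:ℝ)+1) * s ^ (m+1) * (1-s) ^ k) s := by
      intro s _
      have h1 : HasDerivAt (fun s : ℝ => (1 - s)) (-1) s := by
        simpa using (hasDerivAt_id s).const_sub 1
      have h2 : HasDerivAt (fun s : ℝ => s ^ (m+1) * (1-s) ^ (k+1))
          (↑(m + 1) * s ^ (m + 1 - 1) * (1 - s) ^ (k + 1) + s ^ (m + 1) * (↑(k + 1) * (1 - s) ^ (k + 1 - 1) * -1)) s :=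
        (hasDerivAt_pow (m+1) s).mul (h1.pow (k+1))
      convert h2 using 1
      push_cast
      ring
    have hcont : ∀ (c₁ c₂ : ℝ) (p q : ℕ), IntervalIntegrable
        (fun s : ℝ => c₁ * s ^ p * (1-s) ^ q) volume 0 1 := by
      intro c₁ c₂ p q
      exact ((continuous_const.mul (continuous_pow p)).mul
        ((continuous_const.sub continuous_id).pow q)).intervalIntegrable 0 1
    have hint := integral_eq_sub_of_hasDerivAt hderiv
      (((hcont _ 0 m (k+1)).sub (hcont _ 0 (m+1) k)))
    rw [intervalIntegral.integral_sub (hcont _ 0 m (k+1)) (hcont _ 0 (m+1) k)] at hint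
    simp only [one_pow, sub_self, ne_eq, zero_pow, mul_zero, zero_mul, one_mul, mul_one] at hint
    have e1 : ∫ s in (0:ℝ)..1, ((m:ℝ)+1) * s ^ m * (1-s) ^ (k+1)
        = ((m:ℝ)+1) * ∫ s in (0:ℝ)..1, s ^ m * (1-s) ^ (k+1) := by
      rw [← intervalIntegral.integral_const_mul]; congr 1; ext s; ring
    have e2 : ∫ s in (0:ℝ)..1, ((k:ℝ)+1) * s ^ (m+1) * (1-s) ^ k
        = ((k:ℝ)+1) * ∫ s in (0:ℝ)..1, s ^ (m+1) * (1-s) ^ k := by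
      rw [← intervalIntegral.integral_const_mul]; congr 1; ext s; ring
    rw [e1, e2, ih (m+1)] at hint
    have hm : ((m:ℝ)+1) ≠ 0 := by positivity
    have h3 : (∫ s in (0:ℝ)..1, s ^ m * (1-s) ^ (k+1))
        = ((k:ℝ)+1) * ((m+1)! * k ! / (m + 1 + k + 1)!) / ((m:ℝ)+1) := by
      field_simp at hint ⊢
      simp at hint
      linarith [hint]
    rw [h3]
    have : (m + (k+1) + 1)! = (m + 1 + k + 1)! := by ring_nf
    rw [this]
    rw [Nat.factorial_succ m, Nat.factorial_succ k]
    push_cast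
    field_simp

lemma choose_key_aux (x d r : ℕ) (hr : r ≤ d) :
    (x + d + 3).choose (d - r) * ((x + r).choose r * ((x + r + 1) * ((x + r + 2) * (x + r + 3))))
      * (x ! * d !) * ((d - r)! * r !)
    = (x + d + 3)! * d.choose r * ((d - r)! * r !) := by
  have h1 : (x + r).choose r * r ! * x ! = (x + r)! := by
    have := Nat.choose_mul_factorial_mul_factorial (show r ≤ x + r by omega)
    simpa [Nat.add_sub_cancel] using this
  have h2 : (x + r + 1) * ((x + r + 2) * (x + r + 3)) * (x + r)! = (x + r + 3)! := by
    rw [Nat.factorial_succ (x+r+2), Nat.factorial_succ (x+r+1), Nat.factorial_succ (x+r)]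
    ring
  have h3 : (x + d + 3).choose (d - r) * (d - r)! * (x + r + 3)! = (x + d + 3)! := by
    have hle : d - r ≤ x + d + 3 := by omega
    have := Nat.choose_mul_factorial_mul_factorial hle
    have he : x + d + 3 - (d - r) = x + r + 3 := by omega
    rw [he] at this
    simpa [mul_assoc] using this
  have h4 : d.choose r * r ! * (d - r)! = d ! := Nat.choose_mul_factorial_mul_factorial hr
  calc (x + d + 3).choose (d - r) * ((x + r).choose r * ((x + r + 1) * ((x + r + 2) * (x + r + 3))))
      * (x ! * d !) * ((d - r)! * r !)
      = ((x + d + 3).choose (d - r) * (d - r)!) * (((x + r).choose r * r ! * x !)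
        * ((x + r + 1) * ((x + r + 2) * (x + r + 3)))) * d ! := by ring
    _ = ((x + d + 3).choose (d - r) * (d - r)!) * (x + r + 3)! * d ! := by rw [h1, ← h2]; ring
    _ = (x + d + 3)! * d ! := by rw [← h3]
    _ = (x + d + 3)! * d.choose r * ((d - r)! * r !) := by rw [← h4]; ring

lemma int_pow_sq (m : ℕ) (a : ℝ) :
    ∫ s in (0:ℝ)..a, s ^ m * (a - s) ^ 2
      = 2 * a ^ (m + 3) / (((m:ℝ) + 1) * (((m:ℝ) + 2) * ((m:ℝ) + 3))) := by
  have hi : ∀ p : ℕ, IntervalIntegrable (fun s : ℝ => s ^ p) volume 0 a :=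
    fun p => (continuous_pow p).intervalIntegrable 0 a
  have e1 : ∫ s in (0:ℝ)..a, s ^ m * (a - s) ^ 2
      = ∫ s in (0:ℝ)..a, (a ^ 2 * s ^ m - 2 * a * s ^ (m+1) + s ^ (m+2)) :=
    integral_congr fun s _ => by ring
  rw [e1]
  rw [intervalIntegral.integral_add (((hi m).const_mul _).sub ((hi (m+1)).const_mul _)) (hi (m+2)),
    intervalIntegral.integral_sub ((hi m).const_mul _) ((hi (m+1)).const_mul _),
    intervalIntegral.integral_const_mul, intervalIntegral.integral_const_mul,
    integral_pow, integral_pow, integral_pow]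
  have h1 : ((m:ℝ) + 1) ≠ 0 := by positivity
  have h2 : ((m:ℝ) + 2) ≠ 0 := by positivity
  have h3 : ((m:ℝ) + 3) ≠ 0 := by positivity
  push_cast
  field_simp
  ring

lemma choose_key (x d r : ℕ) (hr : r ≤ d) :
    (x + d + 3).choose (d - r) * ((x + r).choose r * ((x + r + 1) * ((x + r + 2) * (x + r + 3))))
      * (x ! * d !) = (x + d + 3)! * d.choose r :=
  Nat.eq_of_mul_eq_mul_right (by positivity) (choose_key_aux x d r hr)

lemma Rn_eq (x d : ℕ) (a : ℝ) :
    ((x + d + 3)! : ℝ) * ∫ s in (0:ℝ)..a, s ^ x * (1 - s) ^ d * (a - s) ^ 2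
      = (x ! * d ! : ℝ) * (2 * a ^ (x + 2) * ∑ r ∈ Finset.range (d + 1),
          ((x + d + 3).choose (d - r) : ℝ) * ((x + r).choose r : ℝ) * (-1) ^ r * a ^ r) * a := by
  have e1 : ∫ s in (0:ℝ)..a, s ^ x * (1 - s) ^ d * (a - s) ^ 2
      = ∫ s in (0:ℝ)..a, ∑ r ∈ Finset.range (d + 1),
          ((d.choose r : ℝ) * (-1) ^ r) * (s ^ (x + r) * (a - s) ^ 2) := by
    apply integral_congr
    intro s _
    simp only
    rw [show (1 - s : ℝ) = (-s) + 1 by ring, add_pow, Finset.mul_sum, Finset.sum_mul]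
    exact Finset.sum_congr rfl fun r hr => by rw [pow_add]; ring
  rw [e1, intervalIntegral.integral_finset_sum (fun r _ => Continuous.intervalIntegrable (by fun_prop) 0 a)]
  simp only [intervalIntegral.integral_const_mul, int_pow_sq]
  rw [Finset.mul_sum]
  rw [show (x ! * d ! : ℝ) * (2 * a ^ (x + 2) * ∑ r ∈ Finset.range (d + 1),
      ((x + d + 3).choose (d - r) : ℝ) * ((x + r).choose r : ℝ) * (-1) ^ r * a ^ r) * a
      = ∑ r ∈ Finset.range (d + 1), (x ! * d ! : ℝ) * (2 * a ^ (x + 2) *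
        (((x + d + 3).choose (d - r) : ℝ) * ((x + r).choose r : ℝ) * (-1) ^ r * a ^ r)) * a by
    simp only [Finset.mul_sum, Finset.sum_mul]]
  apply Finset.sum_congr rfl
  intro r hr
  have hr' : r ≤ d := by simpa using Nat.lt_succ_iff.mp (Finset.mem_range.mp hr)
  have key := choose_key x d r hr'
  have keyR : (((x + d + 3).choose (d - r) * ((x + r).choose r * ((x + r + 1) * ((x + r + 2) * (x + r + 3))))
      * (x ! * d !) : ℕ) : ℝ) = (((x + d + 3)! * d.choose r : ℕ) : ℝ) := by exact_mod_cast key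
  push_cast at keyR
  have hM : (((x:ℝ) + r + 1) * (((x:ℝ) + r + 2) * ((x:ℝ) + r + 3))) ≠ 0 := by positivity
  have hcast : ((x + r : ℕ) : ℝ) = (x : ℝ) + r := by push_cast; ring
  rw [show (((x + r : ℕ) : ℝ) + 1) * ((((x + r : ℕ) : ℝ) + 2) * (((x + r : ℕ) : ℝ) + 3))
      = ((x:ℝ) + r + 1) * (((x:ℝ) + r + 2) * ((x:ℝ) + r + 3)) by rw [hcast]]
  have hsplit : ((x + d + 3)! : ℝ) * ((d.choose r : ℝ) * (-1) ^ r *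
      (2 * a ^ (x + r + 3) / (((x:ℝ) + r + 1) * (((x:ℝ) + r + 2) * ((x:ℝ) + r + 3)))))
      = (((x + d + 3)! : ℝ) * ((d.choose r : ℝ) * (-1) ^ r * (2 * a ^ (x + r + 3))))
        / (((x:ℝ) + r + 1) * (((x:ℝ) + r + 2) * ((x:ℝ) + r + 3))) := by ring
  rw [hsplit, div_eq_iff hM]
  linear_combination (-(2 * a ^ (x + r + 3) * (-1:ℝ) ^ r)) * keyR

lemma main (x d : ℕ) {a : ℝ} (ha0 : 0 < a) (ha1 : a < 1) :
    ((x ! : ℝ) * d !) * (a * Jn (x + d) x a)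
      = ((x + d + 3)! : ℝ) *
        (a * (1 - a) * (In (x + d) d (1 - a) - In (x + d) x a)) := by
  have ha : a ≠ 0 := ha0.ne'
  have ha' : (1 : ℝ) - a ≠ 0 := by intro h; nlinarith
  have hii : ∀ (u v : ℝ) (f : ℝ → ℝ), Continuous f → IntervalIntegrable f volume u v :=
    fun u v f hf => hf.intervalIntegrable u v
  -- J rewritten
  have hJ : Jn (x + d) x a = 2 * a ^ (x + 2) * (∑ r ∈ Finset.range (d + 1),
        ((x + d + 3).choose (d - r) : ℝ) * ((x + r).choose r : ℝ) * (-1) ^ r * a ^ r)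
      - ((d : ℝ) + 1) * (((x : ℝ) + d) + 3) * a + ((d : ℝ) + 1) * ((x : ℝ) + 1) := by
    simp only [Jn, show x + d - x = d from by omega]
    push_cast
    ring
  -- P
  have hP : Pn (x + d) x a = a * In (x + d) x a := Pn_eq _ _ ha
  have hQdef : Pn (x + d) d (1 - a) = (1 - a) * In (x + d) d (1 - a) := Pn_eq _ _ ha'
  have hQQ : (∫ s in a..(1:ℝ), s ^ x * ((1 - s) ^ (d + 1) * (s - a)))
      = (1 - a) * In (x + d) d (1 - a) := by
    rw [← hQdef, Pn, show x + d - d = x from by omega]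
    have hc := integral_comp_sub_left (a := a) (b := (1:ℝ))
      (f := fun u : ℝ => u ^ (d + 1) * ((1 - a) - u) * (1 - u) ^ x) 1
    simp only [sub_self] at hc
    rw [← hc]
    exact integral_congr fun s _ => by ring
  have hA1 : (∫ s in (0:ℝ)..a, s ^ x * (1 - s) ^ (d + 1) * (a * (a - s)))
      = (∫ s in (0:ℝ)..a, s ^ x * (1 - s) ^ d * (a - s) ^ 2) + (1 - a) * Pn (x + d) x a := by
    rw [Pn, show x + d - x = d from by omega, ← intervalIntegral.integral_const_mul,
      ← intervalIntegral.integral_add (hii _ _ _ (by fun_prop)) (hii _ _ _ (by fun_prop))]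
    exact integral_congr fun s _ => by rw [pow_succ]; ring
  have hA2 : (∫ s in a..(1:ℝ), s ^ x * (1 - s) ^ (d + 1) * (a * (a - s)))
      = -(a * ∫ s in a..(1:ℝ), s ^ x * ((1 - s) ^ (d + 1) * (s - a))) := by
    rw [← intervalIntegral.integral_const_mul, ← intervalIntegral.integral_neg]
    exact integral_congr fun s _ => by ring
  have hsplit : (∫ s in (0:ℝ)..a, s ^ x * (1 - s) ^ (d + 1) * (a * (a - s)))
      + (∫ s in a..(1:ℝ), s ^ x * (1 - s) ^ (d + 1) * (a * (a - s)))
      = ∫ s in (0:ℝ)..1, s ^ x * (1 - s) ^ (d + 1) * (a * (a - s)) :=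
    integral_add_adjacent_intervals (hii _ _ _ (by fun_prop)) (hii _ _ _ (by fun_prop))
  have hB : (∫ s in (0:ℝ)..1, s ^ x * (1 - s) ^ (d + 1) * (a * (a - s)))
      = a ^ 2 * ((x ! : ℝ) * (d + 1)! / ((x + d + 2)! : ℝ))
        - a * (((x + 1)! : ℝ) * (d + 1)! / ((x + d + 3)! : ℝ)) := by
    have e : (∫ s in (0:ℝ)..1, s ^ x * (1 - s) ^ (d + 1) * (a * (a - s)))
        = (∫ s in (0:ℝ)..1, a ^ 2 * (s ^ x * (1 - s) ^ (d + 1))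
            - a * (s ^ (x + 1) * (1 - s) ^ (d + 1))) :=
      integral_congr fun s _ => by rw [pow_succ]; ring
    rw [e, intervalIntegral.integral_sub (hii _ _ _ (by fun_prop)) (hii _ _ _ (by fun_prop)),
      intervalIntegral.integral_const_mul, intervalIntegral.integral_const_mul, beta_nat (d + 1) x, beta_nat (d + 1) (x + 1),
      show x + (d + 1) + 1 = x + d + 2 from by omega,
      show x + 1 + (d + 1) + 1 = x + d + 3 from by omega]
  have fact1 : ((x + d + 3)! : ℝ) * ((x ! : ℝ) * (d + 1)! / ((x + d + 2)! : ℝ))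
      = ((x ! : ℝ) * d !) * (((d : ℝ) + 1) * (((x : ℝ) + d) + 3)) := by
    have h1 : ((x + d + 3)! : ℝ) = (((x : ℝ) + d) + 3) * ((x + d + 2)! : ℝ) := by
      rw [show x + d + 3 = (x + d + 2) + 1 from by omega, Nat.factorial_succ]
      push_cast; ring
    have h2 : ((d + 1)! : ℝ) = ((d : ℝ) + 1) * (d ! : ℝ) := by
      rw [Nat.factorial_succ]; push_cast; ring
    have h3 : ((x + d + 2)! : ℝ) ≠ 0 := by positivity
    rw [h1, h2]; field_simp
  have fact2 : ((x + d + 3)! : ℝ) * (((x + 1)! : ℝ) * (d + 1)! / ((x + d + 3)! : ℝ))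
      = ((x ! : ℝ) * d !) * (((d : ℝ) + 1) * ((x : ℝ) + 1)) := by
    have h1 : ((x + 1)! : ℝ) = ((x : ℝ) + 1) * (x ! : ℝ) := by
      rw [Nat.factorial_succ]; push_cast; ring
    have h2 : ((d + 1)! : ℝ) = ((d : ℝ) + 1) * (d ! : ℝ) := by
      rw [Nat.factorial_succ]; push_cast; ring
    have h3 : ((x + d + 3)! : ℝ) ≠ 0 := by positivity
    rw [h1, h2]; field_simp
  have hRkey := Rn_eq x d a
  rw [hJ]
  linear_combination (-1 : ℝ) * hRkey + a ^ 2 * fact1 + (-a) * fact2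
    + ((x + d + 3)! : ℝ) * hB + ((x + d + 3)! : ℝ) * hsplit
    + (-((x + d + 3)! : ℝ)) * hA1 + (-((x + d + 3)! : ℝ)) * hA2
    + (-(((x + d + 3)! : ℝ) * (1 - a))) * hP + (((x + d + 3)! : ℝ) * a) * hQQ

lemma In_lt (n y : ℕ) {a b : ℝ} (ha : 0 < a) (hab : a < b) (hb : b ≤ 1) :
    In n y a < In n y b := by
  have hb0 : 0 < b := ha.trans hab
  have hii : ∀ (u v : ℝ) (f : ℝ → ℝ), Continuous f → IntervalIntegrable f volume u v :=
    fun u v f hf => hf.intervalIntegrable u v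
  have hIa : In n y a = Pn n y a / a := by rw [Pn_eq n y ha.ne']; field_simp
  have hIb : In n y b = Pn n y b / b := by rw [Pn_eq n y hb0.ne']; field_simp
  rw [hIa, hIb, div_lt_div_iff₀ ha hb0]
  have hsplit : (∫ s in (0:ℝ)..a, s ^ (y+1) * (b - s) * (1 - s) ^ (n - y))
      + (∫ s in a..b, s ^ (y+1) * (b - s) * (1 - s) ^ (n - y)) = Pn n y b :=
    integral_add_adjacent_intervals (hii _ _ _ (by fun_prop)) (hii _ _ _ (by fun_prop))
  have h1 : 0 < ∫ s in (0:ℝ)..a,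
      (a * (s ^ (y+1) * (b - s) * (1 - s) ^ (n - y))
        - b * (s ^ (y+1) * (a - s) * (1 - s) ^ (n - y))) := by
    apply intervalIntegral_pos_of_pos_on (hii _ _ _ (by fun_prop)) _ ha
    intro s hs
    have hs1 : s < 1 := by have := hs.2; linarith
    have he : a * (s ^ (y+1) * (b - s) * (1 - s) ^ (n - y))
        - b * (s ^ (y+1) * (a - s) * (1 - s) ^ (n - y))
        = s ^ (y+1) * (1 - s) ^ (n - y) * (s * (b - a)) := by ring
    rw [he]
    have h1s : (0:ℝ) < 1 - s := by linarith
    exact mul_pos (mul_pos (pow_pos hs.1 _) (pow_pos h1s _)) (mul_pos hs.1 (by linarith))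
  have h1' : (∫ s in (0:ℝ)..a,
      (a * (s ^ (y+1) * (b - s) * (1 - s) ^ (n - y))
        - b * (s ^ (y+1) * (a - s) * (1 - s) ^ (n - y))))
      = a * (∫ s in (0:ℝ)..a, s ^ (y+1) * (b - s) * (1 - s) ^ (n - y)) - b * Pn n y a := by
    rw [Pn, intervalIntegral.integral_sub (hii _ _ _ (by fun_prop)) (hii _ _ _ (by fun_prop)),
      intervalIntegral.integral_const_mul, intervalIntegral.integral_const_mul]
  have h2 : 0 ≤ ∫ s in a..b, s ^ (y+1) * (b - s) * (1 - s) ^ (n - y) := by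
    apply intervalIntegral.integral_nonneg hab.le
    intro s hs
    have : (0:ℝ) ≤ 1 - s := by have := hs.2; linarith
    have hs0 : (0:ℝ) ≤ s := le_trans ha.le hs.1
    have : (0:ℝ) ≤ (1 - s) ^ (n - y) := by positivity
    have hbs : (0:ℝ) ≤ b - s := by linarith [hs.2]
    positivity
  rw [h1'] at h1
  nlinarith [h1, h2, mul_le_mul_of_nonneg_left h2 ha.le]


lemma zero_iff (x d : ℕ) {a : ℝ} (ha : a ∈ Set.Ioo (0:ℝ) 1) :
    Jn (x + d) x a = 0 ↔ In (x + d) x a = In (x + d) d (1 - a) := by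
  obtain ⟨ha0, ha1⟩ := ha
  have hm := main x d ha0 ha1
  have hF : ((x + d + 3)! : ℝ) ≠ 0 := by positivity
  have hfd : ((x ! : ℝ) * d !) ≠ 0 := by positivity
  have haa : a * (1 - a) ≠ 0 := by
    have : (0:ℝ) < a * (1 - a) := mul_pos ha0 (by linarith)
    exact this.ne'
  constructor
  · intro h
    rw [h, mul_zero, mul_zero] at hm
    have := (mul_eq_zero.mp hm.symm).resolve_left hF
    have := (mul_eq_zero.mp this).resolve_left haa
    linarith [sub_eq_zero.mp this]
  · intro h
    rw [show In (x + d) d (1 - a) - In (x + d) x a = 0 from by rw [← h]; ring] at hm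
    simp only [mul_zero] at hm
    have := (mul_eq_zero.mp hm).resolve_left hfd
    exact (mul_eq_zero.mp this).resolve_left ha0.ne'

end IBaux

/-- Part (1) of Theorem 3: the iterative Bayes estimate `τ` is the unique zero of
`J_n(·, x)` in `(0, 1)`. -/
theorem Jn_unique_zero (n x : ℕ) (hx : x ≤ n)
    (τ : ℝ) (hτ : τ ∈ Set.Ioo (0 : ℝ) 1)
    (heq : In n x τ = In n (n - x) (1 - τ)) :
    Jn n x τ = 0 ∧ ∀ a ∈ Set.Ioo (0 : ℝ) 1, Jn n x a = 0 → a = τ := by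
  obtain ⟨d, rfl⟩ := Nat.exists_eq_add_of_le hx
  have hd : x + d - x = d := by omega
  rw [hd] at heq
  have key : ∀ c : ℝ, c ∈ Set.Ioo (0:ℝ) 1 → Jn (x + d) x c = 0 →
      In (x + d) x c = In (x + d) d (1 - c) := fun c hc h => (zero_iff x d hc).mp h
  have inj : ∀ c : ℝ, c ∈ Set.Ioo (0:ℝ) 1 → In (x + d) x c = In (x + d) d (1 - c) → c = τ := by
    intro c hc hDc
    by_contra hne
    rcases lt_or_gt_of_ne hne with h | h
    · have h1 : In (x + d) x c < In (x + d) x τ := In_lt _ _ hc.1 h hτ.2.le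
      have h2 : In (x + d) d (1 - τ) < In (x + d) d (1 - c) :=
        In_lt _ _ (by linarith [hτ.2]) (by linarith) (by linarith [hc.1])
      linarith [hDc, heq]
    · have h1 : In (x + d) x τ < In (x + d) x c := In_lt _ _ hτ.1 h hc.2.le
      have h2 : In (x + d) d (1 - c) < In (x + d) d (1 - τ) :=
        In_lt _ _ (by linarith [hc.2]) (by linarith) (by linarith [hτ.1])
      linarith [hDc, heq]
  exact ⟨(zero_iff x d hτ).mpr heq, fun a ha hJ => inj a ha (key a ha hJ)⟩
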